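/- Let d ≥ 1, let q ≥ 2 be an integer, let C > 0, and let (b_n)_{n≥0} be a sequence of nonnegative real numbers satisfying b_n ≤ C·q^n for every n. Then for every (s_1,…,s_d) ∈ ℂ^d in the region (R), the family of complex numbers ∏_{k=1}^d b_{n_k}·q^{−n_k s_k}, indexed by all tuples of natural numbers with 0 ≤ n_1 ≤ ⋯ ≤ n_d, is absolutely summable. -/

import Mathlib

def finConsNatEquiv (d : ℕ) : ℕ × (Fin d → ℕ) ≃ (Fin (d+1) → ℕ) where
  toFun p := Fin.cons p.1 p.2
  invFun m := (m 0, fun j => m j.succ)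
  left_inv p := by simp
  right_inv m := by
    funext k
    induction k using Fin.cases <;> simp

lemma summable_pi_prod : ∀ {d : ℕ} (g : Fin d → ℕ → ℝ), (∀ j n, 0 ≤ g j n) →
    (∀ j, Summable (g j)) → Summable (fun m : Fin d → ℕ => ∏ j, g j (m j)) := by
  intro d
  induction d with
  | zero => intro g _ _; exact .of_finite
  | succ d ih =>
    intro g hg0 hg
    have htail : Summable (fun m : Fin d → ℕ => ∏ j, g j.succ (m j)) :=
      ih _ (fun j n => hg0 _ _) (fun j => hg _)
    have hs2 := Summable.mul_of_nonneg (hg 0) htail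
      (fun n => hg0 0 n) (fun m => Finset.prod_nonneg fun j _ => hg0 _ _)
    refine ((finConsNatEquiv d).summable_iff).mp (hs2.congr fun p => ?_)
    simp only [Function.comp_apply, finConsNatEquiv, Equiv.coe_fn_mk, Fin.prod_univ_succ,
      Fin.cons_zero, Fin.cons_succ]

def psum {d : ℕ} (m : Fin d → ℕ) (k : Fin d) : ℕ := ∑ j ∈ Finset.Iic k, m j

lemma Iic_fin_zero {d : ℕ} (k : Fin d) (hk : (k : ℕ) = 0) : Finset.Iic k = {k} := by
  ext j
  simp only [Finset.mem_Iic, Finset.mem_singleton, Fin.le_def, Fin.ext_iff]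
  omega

lemma Iic_fin_succ {d i : ℕ} (h : i + 1 < d) :
    Finset.Iic (⟨i+1, h⟩ : Fin d) = insert ⟨i+1, h⟩ (Finset.Iic ⟨i, by omega⟩) := by
  ext j
  simp only [Finset.mem_Iic, Finset.mem_insert, Fin.le_def, Fin.ext_iff]
  omega

lemma psum_monotone {d : ℕ} (m : Fin d → ℕ) : Monotone (psum m) :=
  fun _ _ h => Finset.sum_le_sum_of_subset (Finset.Iic_subset_Iic.mpr h)

def dsum {d : ℕ} (n : Fin d → ℕ) (k : Fin d) : ℕ :=
  if h : (k : ℕ) = 0 then n k else n k - n ⟨(k : ℕ) - 1, by omega⟩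

def monotoneEquiv (d : ℕ) : (Fin d → ℕ) ≃ {n : Fin d → ℕ // Monotone n} where
  toFun m := ⟨psum m, psum_monotone m⟩
  invFun n := dsum n.1
  left_inv m := by
    funext k
    rcases k with ⟨i, hi⟩
    show dsum (psum m) ⟨i, hi⟩ = m ⟨i, hi⟩
    cases i with
    | zero => simp [psum, Iic_fin_zero, dsum]
    | succ i =>
      rw [dsum, dif_neg (by simp)]
      show psum m ⟨i+1, hi⟩ - psum m ⟨i, by omega⟩ = m ⟨i+1, hi⟩
      rw [psum, Iic_fin_succ hi, Finset.sum_insert (by simp [Finset.mem_Iic, Fin.le_def])]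
      simp [psum]
  right_inv := by
    rintro ⟨n, hn⟩
    ext k
    rcases k with ⟨i, hi⟩
    show psum (dsum n) ⟨i, hi⟩ = n ⟨i, hi⟩
    induction i with
    | zero => simp [psum, Iic_fin_zero, dsum]
    | succ i ih =>
      rw [psum, Iic_fin_succ hi, Finset.sum_insert (by simp [Finset.mem_Iic, Fin.le_def])]
      have h1 : psum (dsum n) ⟨i, by omega⟩ = n ⟨i, by omega⟩ := ih (by omega)
      rw [show ∑ j ∈ Finset.Iic (⟨i, by omega⟩ : Fin d), dsum n j
          = psum (dsum n) ⟨i, by omega⟩ from rfl, h1]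
      rw [dsum, dif_neg (by simp)]
      have hle : n ⟨i, by omega⟩ ≤ n ⟨i+1, hi⟩ := hn (by simp [Fin.le_def])
      simp only [Nat.add_sub_cancel]
      omega

lemma sum_Iic_comm {d : ℕ} (f : Fin d → Fin d → ℝ) :
    ∑ k : Fin d, ∑ j ∈ Finset.Iic k, f j k = ∑ j : Fin d, ∑ k ∈ Finset.Ici j, f j k := by
  calc ∑ k : Fin d, ∑ j ∈ Finset.Iic k, f j k
      = ∑ k : Fin d, ∑ j : Fin d, if j ≤ k then f j k else 0 := by
        refine Finset.sum_congr rfl fun k _ => ?_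
        rw [← Finset.sum_filter]
        refine Finset.sum_congr ?_ fun _ _ => rfl
        ext j; simp
    _ = ∑ j : Fin d, ∑ k : Fin d, if j ≤ k then f j k else 0 := Finset.sum_comm
    _ = ∑ j : Fin d, ∑ k ∈ Finset.Ici j, f j k := by
        refine Finset.sum_congr rfl fun j _ => ?_
        rw [← Finset.sum_filter]
        refine Finset.sum_congr ?_ fun _ _ => rfl
        ext k; simp

/-- Let `d ≥ 1`, `q ≥ 2` an integer, `C > 0`, and `(b_n)` a
sequence of nonnegative reals with `b_n ≤ C·q^n`. For every `(s_1,…,s_d)` in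
the region (R), the family `∏_{k=1}^d b_{n_k} q^{−n_k s_k}`, indexed by tuples
`0 ≤ n_1 ≤ ⋯ ≤ n_d` of naturals, is absolutely summable. -/
theorem multiple_zeta_general_abs_summable
    (d q : ℕ) (hd : 1 ≤ d) (hq : 2 ≤ q) (C : ℝ) (hC : 0 < C)
    (b : ℕ → ℝ) (hb0 : ∀ n, 0 ≤ b n) (hb : ∀ n, b n ≤ C * (q : ℝ) ^ n)
    (s : Fin d → ℂ)
    (hs : ∀ k : Fin d, (d : ℝ) - (k.val : ℝ) < (∑ j ∈ Finset.Ici k, s j).re) :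
    Summable fun n : {n : Fin d → ℕ // Monotone n} =>
      ‖∏ k : Fin d, (b (n.1 k) : ℂ) * (q : ℂ) ^ (-(n.1 k : ℂ) * s k)‖ := by
  have hq0 : (0:ℝ) < (q:ℝ) := by positivity
  have hq1 : (1:ℝ) < (q:ℝ) := by exact_mod_cast hq
  set ε : Fin d → ℝ := fun j => (∑ i ∈ Finset.Ici j, s i).re - ((d : ℝ) - (j.val : ℝ)) with hεdef
  have hεpos : ∀ j, 0 < ε j := fun j => sub_pos.mpr (hs j)
  set r : Fin d → ℝ := fun j => (q:ℝ) ^ (-ε j) with hrdef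
  have hr0 : ∀ j, 0 ≤ r j := fun j => Real.rpow_nonneg hq0.le _
  have hr1 : ∀ j, r j < 1 := fun j =>
    Real.rpow_lt_one_of_one_lt_of_neg hq1 (neg_lt_zero.mpr (hεpos j))
  set g : Fin d → ℕ → ℝ := fun j n => C * r j ^ n with hgdef
  have hg0 : ∀ j n, 0 ≤ g j n := fun j n => mul_nonneg hC.le (pow_nonneg (hr0 j) n)
  have hgsum : ∀ j, Summable (g j) := fun j =>
    (summable_geometric_of_lt_one (hr0 j) (hr1 j)).mul_left C
  rw [← (monotoneEquiv d).summable_iff]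
  refine Summable.of_nonneg_of_le (fun m => norm_nonneg _) (fun m => ?_)
    (summable_pi_prod g hg0 hgsum)
  show ‖∏ k : Fin d, (b (psum m k) : ℂ) * (q : ℂ) ^ (-(psum m k : ℂ) * s k)‖
      ≤ ∏ j, g j (m j)
  set n : Fin d → ℕ := psum m with hndef
  have hnorm : ∀ k : Fin d, ‖(b (n k) : ℂ) * (q : ℂ) ^ (-(n k : ℂ) * s k)‖
      = b (n k) * (q:ℝ) ^ (-(n k : ℝ) * (s k).re) := by
    intro k
    rw [norm_mul, Complex.norm_real, Real.norm_of_nonneg (hb0 _)]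
    have hq : ((q:ℕ):ℂ) = (((q:ℕ):ℝ):ℂ) := by norm_cast
    rw [hq, Complex.norm_cpow_eq_rpow_re_of_pos hq0]
    congr 2
    simp [Complex.mul_re]
  calc ‖∏ k : Fin d, (b (n k) : ℂ) * (q : ℂ) ^ (-(n k : ℂ) * s k)‖
      = ∏ k : Fin d, b (n k) * (q:ℝ) ^ (-(n k : ℝ) * (s k).re) := by
        rw [norm_prod]; exact Finset.prod_congr rfl fun k _ => hnorm k
    _ ≤ ∏ k : Fin d, C * (q:ℝ) ^ ((n k : ℝ) * (1 - (s k).re)) := by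
        refine Finset.prod_le_prod (fun k _ => mul_nonneg (hb0 _) (Real.rpow_nonneg hq0.le _))
          (fun k _ => ?_)
        have h1 : b (n k) * (q:ℝ) ^ (-(n k : ℝ) * (s k).re)
            ≤ (C * (q:ℝ) ^ (n k)) * (q:ℝ) ^ (-(n k : ℝ) * (s k).re) :=
          mul_le_mul_of_nonneg_right (hb (n k)) (Real.rpow_nonneg hq0.le _)
        refine h1.trans_eq ?_
        rw [mul_assoc, ← Real.rpow_natCast (q:ℝ) (n k), ← Real.rpow_add hq0]
        congr 1
        ring
    _ = C ^ d * (q:ℝ) ^ (∑ k : Fin d, (n k : ℝ) * (1 - (s k).re)) := by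
        rw [Finset.prod_mul_distrib, Finset.prod_const, Finset.card_univ, Fintype.card_fin,
          Real.rpow_sum_of_pos hq0]
    _ = ∏ j : Fin d, g j (m j) := by
        have hE : ∑ k : Fin d, (n k : ℝ) * (1 - (s k).re)
            = ∑ j : Fin d, (m j : ℝ) * (-ε j) := by
          have h1 : ∀ k : Fin d, (n k : ℝ) * (1 - (s k).re)
              = ∑ j ∈ Finset.Iic k, (m j : ℝ) * (1 - (s k).re) := by
            intro k
            rw [← Finset.sum_mul, hndef, psum]
            push_cast
            ring
          rw [Finset.sum_congr rfl fun k _ => h1 k, sum_Iic_comm fun j k => (m j : ℝ) * (1 - (s k).re)]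
          refine Finset.sum_congr rfl fun j _ => ?_
          rw [← Finset.mul_sum]
          congr 1
          rw [Finset.sum_sub_distrib, Finset.sum_const, nsmul_eq_mul, mul_one, Fin.card_Ici,
            ← Complex.re_sum, Nat.cast_sub j.2.le, hεdef]
          ring
        rw [hE, Real.rpow_sum_of_pos hq0]
        rw [show (C:ℝ) ^ d = ∏ _j : Fin d, C by
          rw [Finset.prod_const, Finset.card_univ, Fintype.card_fin]]
        rw [← Finset.prod_mul_distrib]
        refine Finset.prod_congr rfl fun j _ => ?_
        rw [hgdef, hrdef]
        congr 1
        rw [mul_comm ((m j : ℝ)) (-ε j), Real.rpow_mul hq0.le, Real.rpow_natCast]
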